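/- arXiv:1612.01833 — 4 statements merged into one kernel-verified Lean document; each statement's English description precedes it below -/
import Mathlib

section
/- For every n ≥ 1 and constants c, l > 0 there exists a constant C = C(n,c,l) > 0 such that for all x, y ∈ ℝⁿ, t > 0, and a ∈ ℝⁿ with |a - (x+y)/2| ≤ l√t, one has ∫_{B(a,c√t)} k(t,x,z) k(t,z,y) dz ≥ C · k(2t,x,y), where k(t,x,y) = (4πt)^{-n/2} exp(-|x-y|²/(4t)). -/
open Real MeasureTheory

set_option maxHeartbeats 1000000

private lemma const_identity (n : ℕ) (c t : ℝ) (hc : 0 < c) (ht : 0 < t) :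
    (4 * π) ^ (-(n : ℝ)) * (8 * π) ^ ((n : ℝ) / 2) * c ^ n * (8 * π * t) ^ (-(n : ℝ) / 2)
      = (4 * π * t) ^ (-(n : ℝ)) * (c * Real.sqrt t) ^ n := by
  have hπ : (0:ℝ) < π := Real.pi_pos
  have h8 : (0:ℝ) ≤ 8 * π := by positivity
  have h4 : (0:ℝ) ≤ 4 * π := by positivity
  have hst : (c * Real.sqrt t) ^ n = c ^ n * t ^ ((n : ℝ) / 2) := by
    rw [mul_pow, ← Real.rpow_natCast (Real.sqrt t) n, Real.rpow_def_of_pos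
      (Real.sqrt_pos.mpr ht), Real.log_sqrt ht.le, Real.rpow_def_of_pos ht]
    ring_nf
  rw [hst, Real.mul_rpow h8 ht.le, Real.mul_rpow h4 ht.le]
  have hcomb : (8 * π) ^ ((n : ℝ) / 2) * ((8 * π) ^ (-(n : ℝ) / 2)) = 1 := by
    rw [← Real.rpow_add (by positivity), show (n:ℝ)/2 + -(n:ℝ)/2 = 0 by ring,
      Real.rpow_zero]
  have hcomb2 : t ^ (-(n : ℝ) / 2) = t ^ (-(n : ℝ)) * t ^ ((n : ℝ) / 2) := by
    rw [← Real.rpow_add ht]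
    ring_nf
  calc (4 * π) ^ (-(n : ℝ)) * (8 * π) ^ ((n : ℝ) / 2) * c ^ n *
        ((8 * π) ^ (-(n : ℝ) / 2) * t ^ (-(n : ℝ) / 2))
      = (4 * π) ^ (-(n : ℝ)) * c ^ n * t ^ (-(n : ℝ) / 2) *
        ((8 * π) ^ ((n : ℝ) / 2) * (8 * π) ^ (-(n : ℝ) / 2)) := by ring
    _ = (4 * π) ^ (-(n : ℝ)) * c ^ n * (t ^ (-(n : ℝ)) * t ^ ((n : ℝ) / 2)) := by
        rw [hcomb, hcomb2]; ring
    _ = (4 * π) ^ (-(n : ℝ)) * t ^ (-(n : ℝ)) * (c ^ n * t ^ ((n : ℝ) / 2)) := by ring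

theorem gaussian_midpoint_ball_integral_lower (n : ℕ) (hn : 1 ≤ n) (c l : ℝ)
    (hc : 0 < c) (hl : 0 < l)
    (k : ℝ → EuclideanSpace ℝ (Fin n) → EuclideanSpace ℝ (Fin n) → ℝ)
    (hk : ∀ s u v, k s u v =
      (4 * π * s) ^ (-(n : ℝ) / 2) * exp (-‖u - v‖ ^ 2 / (4 * s))) :
    ∃ C : ℝ, 0 < C ∧
      ∀ (x y a : EuclideanSpace ℝ (Fin n)) (t : ℝ), 0 < t →
        ‖a - (1 / 2 : ℝ) • (x + y)‖ ≤ l * Real.sqrt t →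
        C * k (2 * t) x y ≤
          ∫ z in Metric.ball a (c * Real.sqrt t), k t x z * k t z y := by
  have hπ : (0:ℝ) < π := Real.pi_pos
  set V := (volume (Metric.ball (0 : EuclideanSpace ℝ (Fin n)) 1)).toReal with hVdef
  have hV : 0 < V := ENNReal.toReal_pos
    (Metric.measure_ball_pos volume 0 one_pos).ne' measure_ball_lt_top.ne
  refine ⟨(4 * π) ^ (-(n : ℝ)) * (8 * π) ^ ((n : ℝ) / 2) * c ^ n *
      exp (-(c + l) ^ 2 / 2) * V, by positivity, ?_⟩
  intro x y a t ht ha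
  have hst : 0 < Real.sqrt t := Real.sqrt_pos.mpr ht
  have hr : 0 < c * Real.sqrt t := by positivity
  set m := (1 / 2 : ℝ) • (x + y) with hm
  set E := exp (-‖x - y‖ ^ 2 / (8 * t)) with hE
  set m0 := (4 * π * t) ^ (-(n : ℝ)) * E * exp (-(c + l) ^ 2 / 2) with hm0
  -- pointwise lower bound on the ball
  have hpt : ∀ z ∈ Metric.ball a (c * Real.sqrt t), m0 ≤ k t x z * k t z y := by
    intro z hz
    rw [hk, hk]
    have hprod : (4 * π * t) ^ (-(n : ℝ) / 2) * exp (-‖x - z‖ ^ 2 / (4 * t)) *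
        ((4 * π * t) ^ (-(n : ℝ) / 2) * exp (-‖z - y‖ ^ 2 / (4 * t)))
        = (4 * π * t) ^ (-(n : ℝ)) *
          exp (-‖x - z‖ ^ 2 / (4 * t) + -‖z - y‖ ^ 2 / (4 * t)) := by
      have hP : (4 * π * t) ^ (-(n : ℝ)) =
          (4 * π * t) ^ (-(n : ℝ) / 2) * (4 * π * t) ^ (-(n : ℝ) / 2) := by
        rw [← Real.rpow_add (by positivity : (0:ℝ) < 4 * π * t)]
        norm_num
      rw [Real.exp_add, hP]; ring
    rw [hprod]
    have hpar : ‖x - z‖ ^ 2 + ‖z - y‖ ^ 2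
        = (‖x - y‖ ^ 2 + 4 * ‖m - z‖ ^ 2) / 2 := by
      have h := parallelogram_law_with_norm ℝ (x - z) (z - y)
      have h1 : x - z + (z - y) = x - y := by abel
      have h2 : x - z - (z - y) = (2 : ℝ) • (m - z) := by
        rw [hm]; module
      rw [h1, h2, norm_smul] at h
      simp only [Real.norm_ofNat] at h
      nlinarith [h]
    have hmz : ‖m - z‖ ≤ (c + l) * Real.sqrt t := by
      have h1 : ‖m - z‖ ≤ ‖m - a‖ + ‖a - z‖ := by
        calc ‖m - z‖ = ‖(m - a) + (a - z)‖ := by abel_nf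
          _ ≤ ‖m - a‖ + ‖a - z‖ := norm_add_le _ _
      have h2 : ‖m - a‖ ≤ l * Real.sqrt t := by rwa [← norm_neg, neg_sub]
      have h3 : ‖a - z‖ < c * Real.sqrt t := by
        rw [← dist_eq_norm]; exact Metric.mem_ball'.mp hz
      nlinarith
    have hmz2 : ‖m - z‖ ^ 2 ≤ (c + l) ^ 2 * t := by
      have h1 := Real.sq_sqrt ht.le
      nlinarith [norm_nonneg (m - z), Real.sqrt_nonneg t, norm_nonneg (m - z)]
    have hexp : -‖x - y‖ ^ 2 / (8 * t) + -(c + l) ^ 2 / 2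
        ≤ -‖x - z‖ ^ 2 / (4 * t) + -‖z - y‖ ^ 2 / (4 * t) := by
      set A := ‖x - z‖ with hA
      set B := ‖z - y‖ with hB
      set D := ‖x - y‖ with hD
      set M := ‖m - z‖ with hM
      have heq : -A ^ 2 / (4 * t) + -B ^ 2 / (4 * t)
          = -D ^ 2 / (8 * t) + -M ^ 2 / (2 * t) := by
        have ht' : t ≠ 0 := ht.ne'
        field_simp
        linear_combination (-16) * hpar
      rw [heq]
      have hfin : -(c + l) ^ 2 / 2 ≤ -M ^ 2 / (2 * t) := by
        rw [div_le_div_iff₀ (by norm_num) (by positivity)]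
        nlinarith
      linarith
    rw [hm0, hE]
    have h0 : (0:ℝ) ≤ (4 * π * t) ^ (-(n : ℝ)) := by positivity
    calc (4 * π * t) ^ (-(n : ℝ)) * exp (-‖x - y‖ ^ 2 / (8 * t)) * exp (-(c + l) ^ 2 / 2)
        = (4 * π * t) ^ (-(n : ℝ)) * exp (-‖x - y‖ ^ 2 / (8 * t) + -(c + l) ^ 2 / 2) := by
          rw [Real.exp_add]; ring
      _ ≤ _ := by
          exact mul_le_mul_of_nonneg_left (Real.exp_le_exp.mpr hexp) h0
  -- integrability
  have hcont : Continuous fun z : EuclideanSpace ℝ (Fin n) => k t x z * k t z y := by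
    have : (fun z : EuclideanSpace ℝ (Fin n) => k t x z * k t z y)
        = fun z => ((4 * π * t) ^ (-(n : ℝ) / 2) * exp (-‖x - z‖ ^ 2 / (4 * t))) *
          ((4 * π * t) ^ (-(n : ℝ) / 2) * exp (-‖z - y‖ ^ 2 / (4 * t))) := by
      funext z; rw [hk, hk]
    rw [this]
    fun_prop
  have hint : IntegrableOn (fun z => k t x z * k t z y)
      (Metric.ball a (c * Real.sqrt t)) volume :=
    (hcont.continuousOn.integrableOn_compact (isCompact_closedBall a _)).mono_set
      Metric.ball_subset_closedBall
  have hkey := setIntegral_ge_of_const_le measurableSet_ball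
    measure_ball_lt_top.ne hpt hint
  -- volume of the ball
  have hvol : (volume (Metric.ball a (c * Real.sqrt t))).toReal = (c * Real.sqrt t) ^ n * V := by
    rw [Measure.addHaar_ball_of_pos volume a hr, ENNReal.toReal_mul,
      ENNReal.toReal_ofReal (by positivity), finrank_euclideanSpace_fin]
  rw [measureReal_def, hvol, smul_eq_mul, mul_comm ((c * Real.sqrt t) ^ n * V)] at hkey
  refine le_trans (le_of_eq ?_) hkey
  rw [hk]
  have h8 : 4 * (2 * t) = 8 * t := by ring
  rw [h8, ← hE, hm0]
  have hci := const_identity n c t hc ht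
  calc (4 * π) ^ (-(n : ℝ)) * (8 * π) ^ ((n : ℝ) / 2) * c ^ n * exp (-(c + l) ^ 2 / 2) * V *
        ((4 * π * (2 * t)) ^ (-(n : ℝ) / 2) * E)
      = ((4 * π) ^ (-(n : ℝ)) * (8 * π) ^ ((n : ℝ) / 2) * c ^ n * (8 * π * t) ^ (-(n : ℝ) / 2)) *
        (exp (-(c + l) ^ 2 / 2) * V * E) := by
        rw [show 4 * π * (2 * t) = 8 * π * t by ring]; ring
    _ = ((4 * π * t) ^ (-(n : ℝ)) * (c * Real.sqrt t) ^ n) *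
        (exp (-(c + l) ^ 2 / 2) * V * E) := by rw [hci]
    _ = (4 * π * t) ^ (-(n : ℝ)) * E * exp (-(c + l) ^ 2 / 2) *
        ((c * Real.sqrt t) ^ n * V) := by ring
end

section
/- Let H = {x ∈ ℝⁿ : x₁ < 1}, P(y) = (2-y₁, y₂,…,y_n), and define the half-space Dirichlet heat kernel k_H(t,x,y) = k(t,x,y) - k(t,x,P(y)) where k is the Gaussian kernel. Then there exists a constant C = C(n) > 1 such that for all x, y ∈ H and t > 0: C⁻¹ (1 ∧ ((1-x₁)(1-y₁)/t)) k(t,x,y) ≤ k_H(t,x,y) ≤ C (1 ∧ ((1-x₁)(1-y₁)/t)) k(t,x,y). -/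
open Real

theorem halfspace_heat_kernel_estimate (n : ℕ)
    (P : EuclideanSpace ℝ (Fin (n + 1)) → EuclideanSpace ℝ (Fin (n + 1)))
    (hP : ∀ (y : EuclideanSpace ℝ (Fin (n + 1))) (i : Fin (n + 1)),
      P y i = if i = 0 then 2 - y 0 else y i)
    (k : ℝ → EuclideanSpace ℝ (Fin (n + 1)) → EuclideanSpace ℝ (Fin (n + 1)) → ℝ)
    (hk : ∀ s u v, k s u v =
      (4 * π * s) ^ (-(((n : ℝ) + 1)) / 2) * exp (-‖u - v‖ ^ 2 / (4 * s))) :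
    ∃ C : ℝ, 1 < C ∧
      ∀ (x y : EuclideanSpace ℝ (Fin (n + 1))) (t : ℝ),
        x 0 < 1 → y 0 < 1 → 0 < t →
        C⁻¹ * (min 1 ((1 - x 0) * (1 - y 0) / t)) * k t x y ≤
            k t x y - k t x (P y) ∧
          k t x y - k t x (P y) ≤
            C * (min 1 ((1 - x 0) * (1 - y 0) / t)) * k t x y := by
  refine ⟨3, by norm_num, ?_⟩
  intro x y t hx hy ht
  have ha : 0 < 1 - x 0 := by linarith
  have hb : 0 < 1 - y 0 := by linarith
  have hs' : (1 - x 0) * (1 - y 0) / t = (1 - x 0) * (1 - y 0) / t := rfl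
  set s : ℝ := (1 - x 0) * (1 - y 0) / t with hsdef
  have hs : 0 < s := by positivity
  -- norm squared formula
  have hnormsq : ∀ u : EuclideanSpace ℝ (Fin (n+1)), ‖u‖^2 = ∑ i, (u i)^2 := by
    intro u
    rw [EuclideanSpace.norm_eq, Real.sq_sqrt (by positivity)]
    simp [sq_abs]
  have hdiff : ‖x - P y‖^2 = ‖x - y‖^2 + 4 * ((1 - x 0) * (1 - y 0)) := by
    rw [hnormsq, hnormsq]
    have hterm : ∀ i : Fin (n+1), (x - P y) i ^ 2 =
        (x - y) i ^ 2 + (if i = 0 then 4 * ((1 - x 0) * (1 - y 0)) else 0) := by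
      intro i
      by_cases h : i = 0
      · subst h
        simp only [PiLp.sub_apply, hP]
        norm_num
        ring
      · simp [PiLp.sub_apply, hP, h]
    simp only [hterm, Finset.sum_add_distrib, Finset.sum_ite_eq', Finset.mem_univ, if_pos]
  -- kernel relation
  have hK : 0 < k t x y := by
    rw [hk]
    have := Real.pi_pos
    positivity
  have hk2 : k t x (P y) = k t x y * exp (-s) := by
    have hexp : exp (-(‖x - y‖^2 + 4*((1 - x 0)*(1 - y 0)))/(4*t)) =
        exp (-‖x - y‖^2/(4*t)) * exp (-s) := by
      rw [hsdef, ← Real.exp_add]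
      congr 1
      field_simp
      ring
    rw [hk, hk, hdiff, hexp]
    ring
  -- scalar inequalities for 1 - exp(-s)
  have h2 : 1 - exp (-s) ≤ min 1 s := by
    refine le_min (by linarith [Real.exp_pos (-s)]) ?_
    have := Real.add_one_le_exp (-s)
    linarith
  have hminpos : 0 < min 1 s := lt_min one_pos hs
  have h1 : (3:ℝ)⁻¹ * min 1 s ≤ 1 - exp (-s) := by
    rcases le_total s 1 with h | h
    · rw [min_eq_right h]
      have hE := Real.add_one_le_exp s
      have hEp := Real.exp_pos s
      have h13 : (0:ℝ) < 1 - s/3 := by linarith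
      have key : 1 ≤ (1 - s/3) * exp s := by nlinarith [mul_le_mul_of_nonneg_left hE h13.le]
      have hinv : (exp s)⁻¹ ≤ 1 - s/3 := by
        rw [inv_eq_one_div, div_le_iff₀ hEp]
        linarith
      rw [Real.exp_neg]
      linarith
    · rw [min_eq_left h]
      have h1' : exp (-s) ≤ exp (-1) := Real.exp_le_exp.mpr (by linarith)
      have h2' : (2:ℝ) ≤ exp 1 := by
        have := Real.add_one_le_exp (1:ℝ); linarith
      have h3' : exp (-1) ≤ 2⁻¹ := by
        rw [Real.exp_neg]
        exact inv_anti₀ (by norm_num) h2'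
      linarith
  constructor
  · calc (3:ℝ)⁻¹ * min 1 s * k t x y ≤ (1 - exp (-s)) * k t x y :=
          mul_le_mul_of_nonneg_right h1 hK.le
      _ = k t x y - k t x (P y) := by rw [hk2]; ring
  · calc k t x y - k t x (P y) = (1 - exp (-s)) * k t x y := by rw [hk2]; ring
      _ ≤ min 1 s * k t x y := mul_le_mul_of_nonneg_right h2 hK.le
      _ ≤ 3 * min 1 s * k t x y := by nlinarith [hminpos, hK]
end

section
/- Let k(t,x,y) = (4πt)^{-n/2}exp(-|x-y|²/(4t)) and let x, y ∈ B(0,1)\{0} with angle θ between them, x̄ = ((2-|x|)/|x|)x, ȳ = ((2-|y|)/|y|)y. Then k(t,x,ȳ) = exp(-(1-|y|)(1-|x|cos θ)/t)·k(t,x,y) and k(t,x̄,ȳ) = exp(-(1-cos θ)((1-|x|)+(1-|y|))/t)·k(t,x,y). -/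
open Real InnerProductGeometry

theorem gaussian_kernel_reflected_points (n : ℕ)
    (x y : EuclideanSpace ℝ (Fin n)) (hx : x ≠ 0) (hy : y ≠ 0)
    (hx1 : ‖x‖ < 1) (hy1 : ‖y‖ < 1) (t : ℝ) (ht : 0 < t)
    (k : ℝ → EuclideanSpace ℝ (Fin n) → EuclideanSpace ℝ (Fin n) → ℝ)
    (hk : ∀ s u v, k s u v =
      (4 * π * s) ^ (-(n : ℝ) / 2) * Real.exp (-‖u - v‖ ^ 2 / (4 * s))) :
    k t x (((2 - ‖y‖) / ‖y‖) • y) =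
        Real.exp (-((1 - ‖y‖) * (1 - ‖x‖ * Real.cos (angle x y))) / t) * k t x y ∧
      k t (((2 - ‖x‖) / ‖x‖) • x) (((2 - ‖y‖) / ‖y‖) • y) =
        Real.exp (-((1 - Real.cos (angle x y)) * ((1 - ‖x‖) + (1 - ‖y‖))) / t) *
          k t x y := by
  have hxn : (0:ℝ) < ‖x‖ := norm_pos_iff.mpr hx
  have hyn : (0:ℝ) < ‖y‖ := norm_pos_iff.mpr hy
  have hcx : (0:ℝ) ≤ (2 - ‖x‖) / ‖x‖ := div_nonneg (by linarith) hxn.le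
  have hcy : (0:ℝ) ≤ (2 - ‖y‖) / ‖y‖ := div_nonneg (by linarith) hyn.le
  have hnx : ‖((2 - ‖x‖) / ‖x‖) • x‖ = 2 - ‖x‖ := by
    rw [norm_smul, Real.norm_of_nonneg hcx]
    field_simp
  have hny : ‖((2 - ‖y‖) / ‖y‖) • y‖ = 2 - ‖y‖ := by
    rw [norm_smul, Real.norm_of_nonneg hcy]
    field_simp
  have hinner : (inner ℝ x y : ℝ) = Real.cos (angle x y) * (‖x‖ * ‖y‖) :=
    (cos_angle_mul_norm_mul_norm x y).symm
  have h1 : (inner ℝ x (((2 - ‖y‖) / ‖y‖) • y) : ℝ)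
      = (2 - ‖y‖) / ‖y‖ * (Real.cos (angle x y) * (‖x‖ * ‖y‖)) := by
    rw [real_inner_smul_right, hinner]
  have h2 : (inner ℝ (((2 - ‖x‖) / ‖x‖) • x) (((2 - ‖y‖) / ‖y‖) • y) : ℝ)
      = (2 - ‖x‖) / ‖x‖ * ((2 - ‖y‖) / ‖y‖ * (Real.cos (angle x y) * (‖x‖ * ‖y‖))) := by
    rw [real_inner_smul_left, real_inner_smul_right, hinner]
  have hexp : ∀ A B C : ℝ, A = B + C → Real.exp A = Real.exp B * Real.exp C := by
    intro A B C h; rw [h, Real.exp_add]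
  constructor
  · rw [hk, hk,
      hexp (-‖x - ((2 - ‖y‖) / ‖y‖) • y‖ ^ 2 / (4 * t))
        (-((1 - ‖y‖) * (1 - ‖x‖ * Real.cos (angle x y))) / t) (-‖x - y‖ ^ 2 / (4 * t))
        (by rw [norm_sub_sq_real, norm_sub_sq_real, h1, hinner, hny]; field_simp; ring)]
    ring
  · rw [hk, hk,
      hexp (-‖((2 - ‖x‖) / ‖x‖) • x - ((2 - ‖y‖) / ‖y‖) • y‖ ^ 2 / (4 * t))
        (-((1 - Real.cos (angle x y)) * ((1 - ‖x‖) + (1 - ‖y‖))) / t) (-‖x - y‖ ^ 2 / (4 * t))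
        (by rw [norm_sub_sq_real, norm_sub_sq_real, h2, hinner, hnx, hny]; field_simp; ring)]
    ring
end

section
/- Let x, y ∈ B(0,1) ⊂ ℝⁿ be nonzero with angle θ = ∠(x,y) < π/4, and suppose |x|, |y| ≥ 15/16 and cos θ ≤ |x| ≤ |y|. Then |x|sin θ ≤ |x-y| and |x-y| ≤ |y|tan θ, and consequently there is an absolute constant c > 1 with c⁻¹|x-y|² ≤ 1 - cos θ ≤ c|x-y|² and c⁻¹|x-y|² ≤ 1 - |x|cos θ ≤ c|x-y|². -/
open Real InnerProductGeometry

set_option maxHeartbeats 800000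


private lemma aux_arith (a b c0 s d : ℝ)
    (hd2 : d ^ 2 = a ^ 2 + b ^ 2 - 2 * (a * b * c0))
    (hsc : s ^ 2 + c0 ^ 2 = 1) (hs0 : 0 ≤ s) (hd0 : 0 ≤ d)
    (hc0half : 1 / 2 ≤ c0) (hc01 : c0 ≤ 1)
    (hx15 : 15 / 16 ≤ a) (hxn : a < 1) (hyn : b < 1)
    (hca : c0 ≤ a) (hab : a ≤ b)
    (hc1sq : (a * s) ^ 2 ≤ d ^ 2) (hc2sq : (d * c0) ^ 2 ≤ (b * s) ^ 2) :
    (8:ℝ)⁻¹ * d ^ 2 ≤ 1 - c0 ∧ 1 - c0 ≤ 8 * d ^ 2 ∧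
      (8:ℝ)⁻¹ * d ^ 2 ≤ 1 - a * c0 ∧ 1 - a * c0 ≤ 8 * d ^ 2 := by
  have hb0 : (0:ℝ) < b := by linarith
  have hupper : 1 - c0 ≤ 8 * d ^ 2 := by
    have ha2 : (225/256 : ℝ) ≤ a ^ 2 := by nlinarith
    have h1 : (225/256 : ℝ) * s ^ 2 ≤ a ^ 2 * s ^ 2 :=
      mul_le_mul_of_nonneg_right ha2 (sq_nonneg s)
    have h2 : 1 - c0 ≤ s ^ 2 := by nlinarith
    nlinarith
  have hlower : (8:ℝ)⁻¹ * d ^ 2 ≤ 1 - c0 := by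
    have h1 : d ^ 2 * (1/4 : ℝ) ≤ (d * c0) ^ 2 := by
      have hc : (0:ℝ) ≤ c0 ^ 2 - 1/4 := by nlinarith
      nlinarith [mul_nonneg hc (sq_nonneg d)]
    have h2 : (b * s) ^ 2 ≤ s ^ 2 := by
      nlinarith [mul_nonneg (show (0:ℝ) ≤ 1 - b ^ 2 by nlinarith) (sq_nonneg s)]
    have h3 : s ^ 2 ≤ 2 * (1 - c0) := by nlinarith [sq_nonneg (1 - c0)]
    linarith
  refine ⟨hlower, hupper, ?_, ?_⟩
  · have : 1 - c0 ≤ 1 - a * c0 := by nlinarith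
    linarith
  · have : 1 - a * c0 ≤ 2 * (1 - c0) := by nlinarith
    have ha2 : (225/256 : ℝ) ≤ a ^ 2 := by nlinarith
    have h1 : (225/256 : ℝ) * s ^ 2 ≤ a ^ 2 * s ^ 2 :=
      mul_le_mul_of_nonneg_right ha2 (sq_nonneg s)
    have h2 : 1 - c0 ≤ s ^ 2 := by nlinarith
    nlinarith

theorem angle_distance_comparability (n : ℕ) :
    ∃ c : ℝ, 1 < c ∧
      ∀ (x y : EuclideanSpace ℝ (Fin n)), x ≠ 0 → y ≠ 0 →
        ‖x‖ < 1 → ‖y‖ < 1 → angle x y < π / 4 →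
        15 / 16 ≤ ‖x‖ → 15 / 16 ≤ ‖y‖ →
        Real.cos (angle x y) ≤ ‖x‖ → ‖x‖ ≤ ‖y‖ →
        ‖x‖ * Real.sin (angle x y) ≤ ‖x - y‖ ∧
          ‖x - y‖ ≤ ‖y‖ * Real.tan (angle x y) ∧
          c⁻¹ * ‖x - y‖ ^ 2 ≤ 1 - Real.cos (angle x y) ∧
          1 - Real.cos (angle x y) ≤ c * ‖x - y‖ ^ 2 ∧
          c⁻¹ * ‖x - y‖ ^ 2 ≤ 1 - ‖x‖ * Real.cos (angle x y) ∧
          1 - ‖x‖ * Real.cos (angle x y) ≤ c * ‖x - y‖ ^ 2 := by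
  refine ⟨8, by norm_num, ?_⟩
  intro x y hx hy hxn hyn hθlt hx15 hy15 hca hab
  set a := ‖x‖ with hadef
  set b := ‖y‖ with hbdef
  set θ := angle x y with hθdef
  set c0 := Real.cos θ with hc0def
  set s := Real.sin θ with hsdef
  set d := ‖x - y‖ with hddef
  have ha0 : (0:ℝ) < a := norm_pos_iff.mpr hx
  have hb0 : (0:ℝ) < b := norm_pos_iff.mpr hy
  have hd0 : (0:ℝ) ≤ d := norm_nonneg _
  have hθ0 : 0 ≤ θ := angle_nonneg x y
  have hθπ : θ ≤ π := angle_le_pi x y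
  have hs0 : 0 ≤ s := Real.sin_nonneg_of_nonneg_of_le_pi hθ0 hθπ
  have hsc : s ^ 2 + c0 ^ 2 = 1 := Real.sin_sq_add_cos_sq θ
  have hc0half : 1 / 2 ≤ c0 := by
    have h1 : Real.cos (π / 4) < Real.cos θ :=
      Real.cos_lt_cos_of_nonneg_of_le_pi hθ0 (by linarith [Real.pi_pos]) hθlt
    rw [Real.cos_pi_div_four] at h1
    have h2 : (1:ℝ) ≤ Real.sqrt 2 := by
      rw [show (1:ℝ) = Real.sqrt 1 from (Real.sqrt_one).symm]
      exact Real.sqrt_le_sqrt (by norm_num)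
    linarith
  have hc01 : c0 ≤ 1 := Real.cos_le_one θ
  have hinner : (inner ℝ x y : ℝ) = a * b * c0 := by
    rw [← cos_angle_mul_norm_mul_norm]; ring
  have hd2 : d ^ 2 = a ^ 2 + b ^ 2 - 2 * (a * b * c0) := by
    rw [hddef, norm_sub_sq_real, hinner]; ring
  -- claim 1 squared
  have hc1sq : (a * s) ^ 2 ≤ d ^ 2 := by
    nlinarith [sq_nonneg (a * c0 - b), sq_nonneg s]
  have hc1 : a * s ≤ d := by
    have h := Real.sqrt_le_sqrt hc1sq
    rwa [Real.sqrt_sq (by positivity), Real.sqrt_sq hd0] at h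
  -- claim 2
  have hfac1 : 0 ≤ b - a * c0 := by nlinarith
  have hfac2 : 0 ≤ b + a * c0 - 2 * b * c0 ^ 2 := by nlinarith
  have hc2sq : (d * c0) ^ 2 ≤ (b * s) ^ 2 := by
    nlinarith [mul_nonneg hfac1 hfac2]
  have hc2' : d * c0 ≤ b * s := by
    have h := Real.sqrt_le_sqrt hc2sq
    rwa [Real.sqrt_sq (by positivity), Real.sqrt_sq (by positivity)] at h
  have hc0pos : (0:ℝ) < c0 := by linarith
  have hc2 : d ≤ b * Real.tan θ := by
    rw [Real.tan_eq_sin_div_cos, ← hsdef, ← hc0def, ← mul_div_assoc,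
      le_div_iff₀ hc0pos]
    exact hc2'
  obtain ⟨h1, h2, h3, h4⟩ := aux_arith a b c0 s d hd2 hsc hs0 hd0 hc0half hc01 hx15 hxn hyn hca hab hc1sq hc2sq
  exact ⟨hc1, hc2, h1, h2, h3, h4⟩
end
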